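/- Let G be an (m,d,γ)-spectral expander such that 2d + 4 > d²·(2γ² + 4(1 − γ²)/m). Then any two distinct vertices u, v of G satisfy |Γ(u) ∩ Γ(v)| ≤ 1. -/

import Mathlib

open Finset Matrix

/-- `G` (given by its adjacency matrix `M`, a symmetric matrix of natural numbers; a
self-loop at `v` contributes `1` to `M v v` and to the degree of `v`) is an
`(m, d, γ)`-spectral expander: it has `m` vertices, it is `d`-regular, and, viewing `M`
as a real symmetric matrix, `d` is an eigenvalue of multiplicity `1` and every other
eigenvalue `λ` satisfies `|λ| ≤ γ·d`. -/
def IsSpectralExpander {V : Type*} [Fintype V] [DecidableEq V]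
    (M : Matrix V V ℕ) (m d : ℕ) (γ : ℝ) : Prop :=
  Fintype.card V = m ∧
  (∀ v : V, ∑ u : V, M v u = d) ∧
  ∃ hH : (M.map (Nat.cast : ℕ → ℝ)).IsHermitian,
    (∃! i : V, hH.eigenvalues i = (d : ℝ)) ∧
    (∀ i : V, hH.eigenvalues i ≠ (d : ℝ) → |hH.eigenvalues i| ≤ γ * d)

/-- The set of common neighbors `Γ(u) ∩ Γ(v)` of `u` and `v` in the multigraph with
adjacency matrix `M`. -/
def commonNeighbors {V : Type*} [Fintype V] [DecidableEq V]
    (M : Matrix V V ℕ) (u v : V) : Finset V :=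
  Finset.univ.filter (fun w => 1 ≤ M w u ∧ 1 ≤ M w v)

/-- Let `G` be an `(m,d,γ)`-spectral expander such that
`2d + 4 > d²·(2γ² + 4(1 − γ²)/m)`. Then any two distinct vertices `u, v` of `G`
satisfy `|Γ(u) ∩ Γ(v)| ≤ 1`. -/
theorem expander_common_neighbors_le_one {V : Type*} [Fintype V] [DecidableEq V]
    (M : Matrix V V ℕ) (m d : ℕ) (γ : ℝ)
    (hexp : IsSpectralExpander M m d γ)
    (hineq : (d : ℝ) ^ 2 * (2 * γ ^ 2 + 4 * (1 - γ ^ 2) / (m : ℝ)) < 2 * d + 4) :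
    ∀ u v : V, u ≠ v → (commonNeighbors M u v).card ≤ 1 := by
  classical
  intro u v huv
  by_contra hcard
  push_neg at hcard
  obtain ⟨hm, hreg, hH, ⟨i0, hi0, hi0u⟩, hbd⟩ := hexp
  set A := M.map (Nat.cast : ℕ → ℝ) with hAdef
  have hsymm : Aᵀ = A := by
    ext a b; have := congrFun (congrFun hH a) b
    simpa [Matrix.conjTranspose_apply] using this
  have hMsymm : ∀ a b : V, M a b = M b a := by
    intro a b
    have := congrFun (congrFun hsymm b) a
    simp only [Matrix.transpose_apply, hAdef, Matrix.map_apply] at this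
    exact_mod_cast this
  set B : V → V → ℝ := fun i => ⇑(hH.eigenvectorBasis i) with hB
  set lam : V → ℝ := fun i => hH.eigenvalues i with hlam
  have key : ∀ (i : V) (z : V → ℝ), B i ⬝ᵥ (A *ᵥ z) = lam i * (B i ⬝ᵥ z) := by
    intro i z
    show ⇑(hH.eigenvectorBasis i) ⬝ᵥ _ = _
    rw [dotProduct_mulVec, ← mulVec_transpose, hsymm, hH.mulVec_eigenvectorBasis,
      smul_dotProduct, smul_eq_mul]
  have parseval : ∀ p q : V → ℝ, ∑ i, (B i ⬝ᵥ p) * (B i ⬝ᵥ q) = p ⬝ᵥ q := by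
    intro p q
    have h := (hH.eigenvectorBasis).sum_inner_mul_inner
      ((WithLp.equiv 2 (V → ℝ)).symm p) ((WithLp.equiv 2 (V → ℝ)).symm q)
    simp only [PiLp.inner_apply, RCLike.inner_apply, conj_trivial,
      WithLp.equiv_symm_apply, PiLp.toLp_apply] at h
    simpa [hB, dotProduct, mul_comm] using h
  set x : V → ℝ := fun w => (if w = u then 1 else 0) + (if w = v then 1 else 0) with hx
  have hx_dot : ∀ y : V → ℝ, y ⬝ᵥ x = y u + y v := by
    intro y
    simp [hx, dotProduct, mul_add, Finset.sum_add_distrib, mul_ite, mul_one, mul_zero]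
  have hxx : x ⬝ᵥ x = 2 := by
    rw [hx_dot]
    simp [hx, huv, Ne.symm huv]
    norm_num
  set one : V → ℝ := fun _ => 1 with honedef
  have honev : A *ᵥ one = (d : ℝ) • one := by
    funext w
    have h1 : (A *ᵥ one) w = ∑ j, (M w j : ℝ) := by
      simp [Matrix.mulVec, dotProduct, honedef, hAdef, Matrix.map_apply]
    rw [h1, ← Nat.cast_sum, hreg w]
    simp [honedef]
  have hzero : ∀ i, i ≠ i0 → B i ⬝ᵥ one = 0 := by
    intro i hi
    have h1 := key i one
    rw [honev, dotProduct_smul, smul_eq_mul] at h1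
    by_contra h0
    exact (fun h => hi (hi0u i h)) (mul_right_cancel₀ h0 h1.symm)
  have hmpos : 0 < (m : ℝ) := by
    have h1 : 0 < Fintype.card V := Fintype.card_pos_iff.mpr ⟨u⟩
    rw [hm] at h1; exact_mod_cast h1
  have hmne : (m : ℝ) ≠ 0 := ne_of_gt hmpos
  set c : V → ℝ := fun i => B i ⬝ᵥ x with hc
  have hone_one : one ⬝ᵥ one = (m : ℝ) := by
    have h1 : one ⬝ᵥ one = (Fintype.card V : ℝ) := by simp [dotProduct, honedef]
    rw [h1, hm]
  have hone_x : one ⬝ᵥ x = 2 := by rw [hx_dot]; norm_num [honedef]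
  set t : ℝ := B i0 ⬝ᵥ one with ht
  have ht2 : t * t = (m : ℝ) := by
    have h := parseval one one
    rw [hone_one, Finset.sum_eq_single i0
      (fun i _ hi => by rw [hzero i hi]; ring)
      (fun h => absurd (Finset.mem_univ i0) h)] at h
    exact h
  have htc : t * c i0 = 2 := by
    have h := parseval one x
    rw [hone_x, Finset.sum_eq_single i0
      (fun i _ hi => by rw [hzero i hi]; ring)
      (fun h => absurd (Finset.mem_univ i0) h)] at h
    exact h
  have hc0 : c i0 ^ 2 = 4 / (m : ℝ) := by
    rw [eq_div_iff hmne]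
    calc c i0 ^ 2 * m = (t * c i0) ^ 2 := by rw [← ht2]; ring
    _ = 4 := by rw [htc]; norm_num
  have hcsum : ∑ i, c i ^ 2 = 2 := by
    have h := parseval x x
    rw [hxx] at h
    rw [← h]
    exact Finset.sum_congr rfl fun i _ => by rw [sq]
  set y : V → ℝ := A *ᵥ x with hy
  have hQ : y ⬝ᵥ y = ∑ i, lam i ^ 2 * c i ^ 2 := by
    rw [← parseval y y]
    refine Finset.sum_congr rfl fun i _ => ?_
    have h1 := key i x
    rw [h1]; ring
  -- lower bound
  have hcross : (2 : ℕ) ≤ ∑ w, M w u * M w v := by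
    refine le_trans hcard ?_
    calc (commonNeighbors M u v).card = ∑ w ∈ commonNeighbors M u v, 1 :=
        (Finset.card_eq_sum_ones _)
    _ ≤ ∑ w ∈ commonNeighbors M u v, M w u * M w v := by
        refine Finset.sum_le_sum fun w hw => ?_
        simp only [commonNeighbors, Finset.mem_filter] at hw
        simpa using Nat.mul_le_mul hw.2.1 hw.2.2
    _ ≤ ∑ w, M w u * M w v :=
        Finset.sum_le_sum_of_subset (Finset.filter_subset _ _)
  have hcol : ∀ z : V, ∑ w, M w z = d := by
    intro z
    calc ∑ w, M w z = ∑ w, M z w := Finset.sum_congr rfl fun w _ => hMsymm w z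
    _ = d := hreg z
  have hnat : 2 * d + 4 ≤ ∑ w, (M w u + M w v) ^ 2 := by
    have e : ∀ w : V, M w u + 2 * (M w u * M w v) + M w v ≤ (M w u + M w v) ^ 2 := by
      intro w
      have h1 : M w u ≤ M w u ^ 2 := Nat.le_self_pow two_ne_zero _
      have h2 : M w v ≤ M w v ^ 2 := Nat.le_self_pow two_ne_zero _
      nlinarith [h1, h2]
    calc 2 * d + 4 = d + 2 * 2 + d := by ring
    _ ≤ (∑ w, M w u) + 2 * (∑ w, M w u * M w v) + ∑ w, M w v := by
        rw [hcol u, hcol v]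
        have := Nat.mul_le_mul_left 2 hcross
        omega
    _ = ∑ w, (M w u + 2 * (M w u * M w v) + M w v) := by
        rw [Finset.sum_add_distrib, Finset.sum_add_distrib, Finset.mul_sum]
    _ ≤ ∑ w, (M w u + M w v) ^ 2 := Finset.sum_le_sum fun w _ => e w
  have hyw : ∀ w, y w = ((M w u + M w v : ℕ) : ℝ) := by
    intro w
    have h1 : y w = (A w) ⬝ᵥ x := rfl
    rw [h1, hx_dot (A w)]
    simp [hAdef, Matrix.map_apply]
  have hQcast : y ⬝ᵥ y = ((∑ w, (M w u + M w v) ^ 2 : ℕ) : ℝ) := by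
    simp only [dotProduct, hyw]
    push_cast
    exact Finset.sum_congr rfl fun w _ => by ring
  have hQlow : (2 * d + 4 : ℝ) ≤ y ⬝ᵥ y := by
    rw [hQcast]
    exact_mod_cast hnat
  -- upper bound
  have hterm : ∀ i, i ≠ i0 → lam i ^ 2 * c i ^ 2 ≤ γ ^ 2 * d ^ 2 * c i ^ 2 := by
    intro i hi
    have hne : lam i ≠ (d : ℝ) := fun h => hi (hi0u i h)
    have habs := abs_le.mp (hbd i hne)
    have h2 : lam i ^ 2 ≤ (γ * d) ^ 2 := sq_le_sq' habs.1 habs.2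
    nlinarith [sq_nonneg (c i)]
  have hsplit := Finset.sum_erase_add Finset.univ (fun i => lam i ^ 2 * c i ^ 2)
    (Finset.mem_univ i0)
  have hsplitc := Finset.sum_erase_add Finset.univ (fun i => c i ^ 2)
    (Finset.mem_univ i0)
  have herase_le : ∑ i ∈ Finset.univ.erase i0, lam i ^ 2 * c i ^ 2 ≤
      γ ^ 2 * d ^ 2 * ∑ i ∈ Finset.univ.erase i0, c i ^ 2 := by
    rw [Finset.mul_sum]
    exact Finset.sum_le_sum fun i hi => hterm i (Finset.ne_of_mem_erase hi)
  have herasec : ∑ i ∈ Finset.univ.erase i0, c i ^ 2 = 2 - 4 / (m : ℝ) := by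
    have := hsplitc
    rw [hcsum] at this
    rw [← this, hc0]; ring
  have hlam0 : lam i0 = (d : ℝ) := hi0
  have hupper : y ⬝ᵥ y ≤ γ ^ 2 * d ^ 2 * (2 - 4 / (m : ℝ)) + d ^ 2 * (4 / (m : ℝ)) := by
    rw [hQ, ← hsplit]
    rw [herasec] at herase_le
    rw [hlam0, hc0]
    linarith [herase_le]
  have heq : (d : ℝ) ^ 2 * (2 * γ ^ 2 + 4 * (1 - γ ^ 2) / (m : ℝ)) =
      γ ^ 2 * d ^ 2 * (2 - 4 / (m : ℝ)) + d ^ 2 * (4 / (m : ℝ)) := by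
    field_simp
    ring
  linarith [hQlow, hupper, hineq, heq.symm.le, heq.le]
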